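/- Let X be a Hilbert space, W ⊆ X a finite-dimensional subspace, K ⊆ W a compact set, and F : K → Y a continuous injective map into a Hilbert space Y. Then F has a continuous inverse on its image; moreover, if additionally there exists no sequence of pairs (q₁ⁿ, q₂ⁿ) ∈ K × K with ‖q₁ⁿ − q₂ⁿ‖ bounded away from 0 and ‖F(q₁ⁿ) − F(q₂ⁿ)‖ → 0, and F is C¹ on a neighborhood of K with injective derivatives, then there exists C > 0 with ‖q₁ − q₂‖ ≤ C ‖F(q₁) − F(q₂)‖ for all q₁, q₂ ∈ K. -/

import Mathlib

open Filter

/-- Abstract Lipschitz stability on a compact subset of a finite-dimensional subspace.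
A continuous injective map `F` on a compact set `K` contained in a finite-dimensional
subspace `W` has a continuous inverse on its image; if moreover no pair of sequences in
`K` stays uniformly separated while their images converge to each other, and `F` is `C¹`
on an open neighborhood of `K` with injective derivatives on `K`, then `F` satisfies a
Lipschitz stability estimate `‖q₁ − q₂‖ ≤ C ‖F q₁ − F q₂‖` on `K`. -/
theorem lipschitz_stability_on_compact
    {X Y : Type*} [NormedAddCommGroup X] [InnerProductSpace ℂ X] [CompleteSpace X]
    [NormedAddCommGroup Y] [InnerProductSpace ℂ Y] [CompleteSpace Y]
    (W : Submodule ℂ X) (hW : FiniteDimensional ℂ W)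
    (K : Set X) (hKW : K ⊆ (W : Set X)) (hK : IsCompact K)
    (F : X → Y) (hFcont : ContinuousOn F K) (hFinj : Set.InjOn F K) :
    (∃ G : Y → X, ContinuousOn G (F '' K) ∧ ∀ q ∈ K, G (F q) = q) ∧
    ((¬ ∃ (q₁ q₂ : ℕ → X) (ε : ℝ), 0 < ε ∧ (∀ n, q₁ n ∈ K ∧ q₂ n ∈ K) ∧
        (∀ n, ε ≤ ‖q₁ n - q₂ n‖) ∧
        Tendsto (fun n => ‖F (q₁ n) - F (q₂ n)‖) atTop (nhds 0)) →
      ∀ (U : Set X) (F' : X → (X →L[ℂ] Y)), IsOpen U → K ⊆ U →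
        (∀ x ∈ U, HasFDerivAt F (F' x) x) → ContinuousOn F' U →
        (∀ q ∈ K, Function.Injective (F' q)) →
      ∃ C > (0 : ℝ), ∀ q₁ ∈ K, ∀ q₂ ∈ K, ‖q₁ - q₂‖ ≤ C * ‖F q₁ - F q₂‖) := by
  classical
  constructor
  · -- Part 1: continuous inverse on the image.
    haveI : CompactSpace K := isCompact_iff_compactSpace.mp hK
    set f : K → ↥(F '' K) := fun k => ⟨F k, Set.mem_image_of_mem F k.2⟩ with hf
    have hfc : Continuous f :=
      Continuous.subtype_mk (continuousOn_iff_continuous_restrict.mp hFcont) _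
    have hfbij : Function.Bijective f := by
      constructor
      · intro a b hab
        exact Subtype.ext (hFinj a.2 b.2 (congrArg Subtype.val hab))
      · rintro ⟨y, x, hx, rfl⟩
        exact ⟨⟨x, hx⟩, rfl⟩
    have hec : Continuous (Equiv.ofBijective f hfbij) := hfc
    let h := hec.homeoOfEquivCompactToT2
    refine ⟨fun y => if hy : y ∈ F '' K then ((h.symm ⟨y, hy⟩ : K) : X) else 0, ?_, ?_⟩
    · rw [continuousOn_iff_continuous_restrict]
      have heq : (F '' K).restrict
          (fun y => if hy : y ∈ F '' K then ((h.symm ⟨y, hy⟩ : K) : X) else 0)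
          = fun y => ((h.symm y : K) : X) := by
        funext y
        exact dif_pos y.2
      refine (congrArg Continuous heq).mpr ?_
      exact continuous_subtype_val.comp h.symm.continuous
    · intro q hq
      have h1 : h.symm ⟨F q, Set.mem_image_of_mem F hq⟩ = ⟨q, hq⟩ := by
        apply h.injective
        simp only [Homeomorph.apply_symm_apply]
        rfl
      simp [Set.mem_image_of_mem F hq, h1]
  · -- Part 2: Lipschitz stability estimate.
    intro hno U F' hU hKU hderiv hF'cont hinj
    by_contra hC
    push_neg at hC
    have hseq : ∀ n : ℕ, ∃ p : X × X, p.1 ∈ K ∧ p.2 ∈ K ∧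
        ((n : ℝ) + 1) * ‖F p.1 - F p.2‖ < ‖p.1 - p.2‖ := by
      intro n
      obtain ⟨a, ha, b, hb, hab⟩ := hC ((n : ℝ) + 1) (by positivity)
      exact ⟨(a, b), ha, hb, hab⟩
    choose p hp1 hp2 hplt using hseq
    set q₁ : ℕ → X := fun n => (p n).1 with hq₁def
    set q₂ : ℕ → X := fun n => (p n).2 with hq₂def
    have hpos : ∀ n, (0 : ℝ) < ‖q₁ n - q₂ n‖ := fun n =>
      lt_of_le_of_lt (by positivity) (hplt n)
    -- images converge to each other
    obtain ⟨R, hR⟩ := hK.isBounded.subset_closedBall (0 : X)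
    have hRnn : (0 : ℝ) ≤ R := by
      have := hR (hp1 0)
      simpa using le_trans (norm_nonneg _) (by simpa using this)
    have hFdiff : Tendsto (fun n => ‖F (q₁ n) - F (q₂ n)‖) atTop (nhds 0) := by
      have hub : ∀ n : ℕ, ‖F (q₁ n) - F (q₂ n)‖ ≤ (2 * R) * (1 / ((n : ℝ) + 1)) := by
        intro n
        have h1 : ‖q₁ n - q₂ n‖ ≤ 2 * R := by
          have e1 : ‖q₁ n‖ ≤ R := by simpa using hR (hp1 n)
          have e2 : ‖q₂ n‖ ≤ R := by simpa using hR (hp2 n)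
          calc ‖q₁ n - q₂ n‖ ≤ ‖q₁ n‖ + ‖q₂ n‖ := norm_sub_le _ _
            _ ≤ 2 * R := by linarith
        have h2 : ((n : ℝ) + 1) * ‖F (q₁ n) - F (q₂ n)‖ ≤ 2 * R :=
          le_trans (hplt n).le h1
        rw [mul_one_div, le_div_iff₀ (by positivity)]
        linarith [h2]
      have hlim : Tendsto (fun n : ℕ => (2 * R) * (1 / ((n : ℝ) + 1))) atTop (nhds 0) := by
        have := tendsto_one_div_add_atTop_nhds_zero_nat.const_mul (2 * R)
        simpa using this
      exact squeeze_zero (fun n => norm_nonneg _) hub hlim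
    -- extract convergent subsequences
    obtain ⟨a, haK, φ, hφ, hφlim⟩ := hK.tendsto_subseq (x := q₁) hp1
    obtain ⟨b, hbK, φ', hφ', hφ'lim⟩ := hK.tendsto_subseq (x := fun n => q₂ (φ n))
      (fun n => hp2 (φ n))
    set ψ : ℕ → ℕ := φ ∘ φ' with hψdef
    have hψ : StrictMono ψ := hφ.comp hφ'
    have hq₁lim : Tendsto (fun n => q₁ (ψ n)) atTop (nhds a) :=
      hφlim.comp hφ'.tendsto_atTop
    have hq₂lim : Tendsto (fun n => q₂ (ψ n)) atTop (nhds b) := hφ'lim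
    have hFψ : Tendsto (fun n => ‖F (q₁ (ψ n)) - F (q₂ (ψ n))‖) atTop (nhds 0) :=
      hFdiff.comp hψ.tendsto_atTop
    -- the two limits coincide
    have hab : a = b := by
      by_contra hne
      have hεpos : (0 : ℝ) < ‖a - b‖ / 2 := by
        have : a - b ≠ 0 := sub_ne_zero.mpr hne
        have := norm_pos_iff.mpr this
        linarith
      have hnorm : Tendsto (fun n => ‖q₁ (ψ n) - q₂ (ψ n)‖) atTop (nhds ‖a - b‖) :=
        ((hq₁lim.sub hq₂lim).norm)
      have hev : ∀ᶠ n in atTop, ‖a - b‖ / 2 ≤ ‖q₁ (ψ n) - q₂ (ψ n)‖ :=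
        (hnorm.eventually_const_lt (by linarith : ‖a - b‖ / 2 < ‖a - b‖)).mono
          fun n hn => hn.le
      obtain ⟨N, hN⟩ := eventually_atTop.mp hev
      refine hno ⟨fun n => q₁ (ψ (n + N)), fun n => q₂ (ψ (n + N)), ‖a - b‖ / 2,
        hεpos, fun n => ⟨hp1 _, hp2 _⟩, fun n => hN _ (Nat.le_add_left _ _), ?_⟩
      have hshift : Tendsto (fun n : ℕ => n + N) atTop atTop :=
        tendsto_atTop_atTop_of_monotone (fun x y hxy => by omega) (fun c => ⟨c, by omega⟩)
      exact hFψ.comp hshift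
    subst hab
    -- unit direction vectors
    set d : ℕ → X := fun n => q₁ (ψ n) - q₂ (ψ n) with hddef
    have hdpos : ∀ n, (0 : ℝ) < ‖d n‖ := fun n => hpos (ψ n)
    set e : ℕ → X := fun n => ((‖d n‖⁻¹ : ℝ) : ℂ) • d n with hedef
    have henorm : ∀ n, ‖e n‖ = 1 := by
      intro n
      simp only [hedef, norm_smul, Complex.norm_real, Real.norm_eq_abs,
        abs_of_nonneg (inv_nonneg.mpr (norm_nonneg (d n)))]
      exact inv_mul_cancel₀ (ne_of_gt (hdpos n))
    have heW : ∀ n, e n ∈ W :=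
      fun n => W.smul_mem _ (W.sub_mem (hKW (hp1 (ψ n))) (hKW (hp2 (ψ n))))
    -- the unit sphere of W, as a subset of X, is compact
    haveI := hW
    haveI : ProperSpace W := FiniteDimensional.proper ℂ W
    have hScomp : IsCompact (Subtype.val '' (Metric.sphere (0 : W) 1)) :=
      (isCompact_sphere (0 : W) 1).image continuous_subtype_val
    have heS : ∀ n, e n ∈ Subtype.val '' (Metric.sphere (0 : W) 1) := by
      intro n
      refine ⟨⟨e n, heW n⟩, ?_, rfl⟩
      rw [mem_sphere_zero_iff_norm]
      show ‖e n‖ = 1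
      exact henorm n
    obtain ⟨v, hvS, ρ, hρ, hρlim⟩ := hScomp.tendsto_subseq (x := e) heS
    have hvnorm : ‖v‖ = 1 := by
      obtain ⟨w, hw, rfl⟩ := hvS
      have : ‖w‖ = 1 := by simpa [dist_eq_norm] using hw
      simpa using this
    -- the derivative at the limit point kills v
    have haU : a ∈ U := hKU haK
    have hkey : F' a v = 0 := by
      by_contra hv0
      have hδ : (0 : ℝ) < ‖F' a v‖ / 3 := by
        have := norm_pos_iff.mpr hv0
        linarith
      set δ := ‖F' a v‖ / 3 with hδdef
      -- find a ball where the derivative is δ-close to F' a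
      have hcontat : ContinuousAt F' a := hF'cont.continuousAt (hU.mem_nhds haU)
      have hev : ∀ᶠ z in nhds a, z ∈ U ∧ ‖F' z - F' a‖ ≤ δ := by
        filter_upwards [hU.mem_nhds haU,
          hcontat.eventually (Metric.closedBall_mem_nhds (F' a) hδ)] with z hz1 hz2
        exact ⟨hz1, by simpa [dist_eq_norm] using hz2⟩
      obtain ⟨r, hrpos, hr⟩ := Metric.eventually_nhds_iff.mp hev
      -- the mean value estimate on the ball
      have hmvt : ∀ x' ∈ Metric.ball a r, ∀ y' ∈ Metric.ball a r,
          ‖(F y' - F' a y') - (F x' - F' a x')‖ ≤ δ * ‖y' - x'‖ := by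
        intro x' hx' y' hy'
        refine (convex_ball a r).norm_image_sub_le_of_norm_hasFDerivWithin_le
          (f := fun z => F z - F' a z) (f' := fun z => F' z - F' a) ?_ ?_ hx' hy'
        · intro z hz
          have hzU : z ∈ U := (hr (by simpa [Metric.mem_ball] using hz)).1
          exact ((hderiv z hzU).sub ((F' a).hasFDerivAt)).hasFDerivWithinAt
        · intro z hz
          exact (hr (by simpa [Metric.mem_ball] using hz)).2
      -- eventually both points are in the ball and 1/(ψ n + 1) ≤ δ
      have hball1 : ∀ᶠ n in atTop, q₁ (ψ (ρ n)) ∈ Metric.ball a r := by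
        have := (hq₁lim.comp hρ.tendsto_atTop) (Metric.ball_mem_nhds a hrpos)
        exact this
      have hball2 : ∀ᶠ n in atTop, q₂ (ψ (ρ n)) ∈ Metric.ball a r := by
        have := (hq₂lim.comp hρ.tendsto_atTop) (Metric.ball_mem_nhds a hrpos)
        exact this
      have hsmall : ∀ᶠ n in atTop, (1 : ℝ) / ((ψ (ρ n) : ℝ) + 1) ≤ δ := by
        have ht : Tendsto (fun n : ℕ => (1 : ℝ) / ((ψ (ρ n) : ℝ) + 1)) atTop (nhds 0) := by
          have := (tendsto_one_div_add_atTop_nhds_zero_nat (𝕜 := ℝ)).comp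
            ((hψ.comp hρ).tendsto_atTop)
          exact this
        exact (ht.eventually_lt_const hδ).mono fun n hn => hn.le
      -- eventual bound on ‖F' a (e (ρ n))‖
      have hbound : ∀ᶠ n in atTop, ‖F' a (e (ρ n))‖ ≤ 2 * δ := by
        filter_upwards [hball1, hball2, hsmall] with n h1 h2 h3
        set m := ψ (ρ n)
        have hd : ‖F (q₁ m) - F (q₂ m) - F' a (d (ρ n))‖ ≤ δ * ‖d (ρ n)‖ := by
          have := hmvt _ h2 _ h1
          simpa [hddef, map_sub, sub_sub_sub_comm] using this
        have hFd : ‖F (q₁ m) - F (q₂ m)‖ ≤ (1 / ((m : ℝ) + 1)) * ‖d (ρ n)‖ := by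
          have := (hplt m).le
          rw [div_mul_eq_mul_div, le_div_iff₀ (by positivity)]
          linarith [this]
        have hFda : ‖F' a (d (ρ n))‖ ≤ (1 / ((m : ℝ) + 1)) * ‖d (ρ n)‖ + δ * ‖d (ρ n)‖ := by
          calc ‖F' a (d (ρ n))‖
              ≤ ‖F (q₁ m) - F (q₂ m)‖ + ‖F (q₁ m) - F (q₂ m) - F' a (d (ρ n))‖ := by
                have := norm_sub_le (F (q₁ m) - F (q₂ m))
                  (F (q₁ m) - F (q₂ m) - F' a (d (ρ n)))
                simpa using this
            _ ≤ (1 / ((m : ℝ) + 1)) * ‖d (ρ n)‖ + δ * ‖d (ρ n)‖ := add_le_add hFd hd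
        have hcalc : ‖F' a (e (ρ n))‖ = ‖d (ρ n)‖⁻¹ * ‖F' a (d (ρ n))‖ := by
          simp [hedef, map_smul, norm_smul, Complex.norm_real,
            abs_of_nonneg (inv_nonneg.mpr (norm_nonneg _))]
        rw [hcalc]
        rw [inv_mul_le_iff₀ (hdpos (ρ n))]
        calc ‖F' a (d (ρ n))‖ ≤ (1 / ((m : ℝ) + 1)) * ‖d (ρ n)‖ + δ * ‖d (ρ n)‖ := hFda
          _ ≤ δ * ‖d (ρ n)‖ + δ * ‖d (ρ n)‖ := by
              have := mul_le_mul_of_nonneg_right h3 (norm_nonneg (d (ρ n)))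
              linarith
          _ = ‖d (ρ n)‖ * (2 * δ) := by ring
    -- pass to the limit
      have hlimv : Tendsto (fun n => ‖F' a (e (ρ n))‖) atTop (nhds ‖F' a v‖) :=
        (((F' a).continuous.tendsto v).comp hρlim).norm
      have : ‖F' a v‖ ≤ 2 * δ := le_of_tendsto hlimv hbound
      rw [hδdef] at this
      have hpos' : (0 : ℝ) < ‖F' a v‖ := norm_pos_iff.mpr hv0
      linarith
    -- contradiction with injectivity
    have : v = 0 := by
      have := hinj a haK
      have h0 : F' a v = F' a 0 := by simpa using hkey
      exact this h0
    rw [this] at hvnorm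
    simp at hvnorm
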